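/- For λ = 0 and ε = 1, the principal series module I_{0,1} decomposes as a direct sum of two irreducible sl₂-submodules: D₀⁺ spanned by {w_k : k ≥ 1} and D₀⁻ spanned by {w_k : k ≤ −1}. -/
import Mathlib


/-! The principal series module `I_{λ,ε}` in the compact picture: basis
`{w_k : k ≡ ε (mod 2)}`, parametrized as `k = ε + 2n`, with `w_{ε+2n}` encoded
as `Finsupp.single n 1` in `ℤ →₀ ℂ`. -/

/-- `H · w_k = k · w_k`. -/
noncomputable def psH (ε : ℤ) : (ℤ →₀ ℂ) →ₗ[ℂ] (ℤ →₀ ℂ) :=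
  Finsupp.lsum ℂ fun n : ℤ => (((ε + 2 * n : ℤ) : ℂ)) • Finsupp.lsingle n

/-- `E · w_k = ((λ+k+1)/2) · w_{k+2}`. -/
noncomputable def psE (L : ℂ) (ε : ℤ) : (ℤ →₀ ℂ) →ₗ[ℂ] (ℤ →₀ ℂ) :=
  Finsupp.lsum ℂ fun n : ℤ => ((L + ((ε + 2 * n : ℤ) : ℂ) + 1) / 2) • Finsupp.lsingle (n + 1)

/-- `F · w_k = ((λ−k+1)/2) · w_{k−2}`. -/
noncomputable def psF (L : ℂ) (ε : ℤ) : (ℤ →₀ ℂ) →ₗ[ℂ] (ℤ →₀ ℂ) :=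
  Finsupp.lsum ℂ fun n : ℤ => ((L - ((ε + 2 * n : ℤ) : ℂ) + 1) / 2) • Finsupp.lsingle (n - 1)

/-- A subspace of `I_{λ,ε}` is sl₂-invariant if it is stable under `H`, `E` and `F`. -/
def SL2Invariant (L : ℂ) (ε : ℤ) (W : Submodule ℂ (ℤ →₀ ℂ)) : Prop :=
  (∀ x ∈ W, psH ε x ∈ W) ∧ (∀ x ∈ W, psE L ε x ∈ W) ∧ (∀ x ∈ W, psF L ε x ∈ W)

/-- `D₀⁺`: the span of the basis vectors `w_k` of `I_{0,1}` with `k ≥ 1`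
(i.e. `k = 1 + 2n` with `n ≥ 0`). -/
noncomputable def D0plus : Submodule ℂ (ℤ →₀ ℂ) :=
  Submodule.span ℂ {f | ∃ n : ℤ, 0 ≤ n ∧ f = Finsupp.single n 1}

/-- `D₀⁻`: the span of the basis vectors `w_k` of `I_{0,1}` with `k ≤ −1`
(i.e. `k = 1 + 2n` with `n ≤ −1`). -/
noncomputable def D0minus : Submodule ℂ (ℤ →₀ ℂ) :=
  Submodule.span ℂ {f | ∃ n : ℤ, n ≤ -1 ∧ f = Finsupp.single n 1}


lemma psH_single (n : ℤ) (c : ℂ) :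
    psH 1 (Finsupp.single n c) = ((1 + 2*n : ℤ) : ℂ) • Finsupp.single n c := by
  rw [psH, Finsupp.lsum_single, LinearMap.smul_apply, Finsupp.lsingle_apply]

lemma psE_single (n : ℤ) (c : ℂ) :
    psE 0 1 (Finsupp.single n c) = ((n + 1 : ℤ) : ℂ) • Finsupp.single (n+1) c := by
  rw [psE, Finsupp.lsum_single, LinearMap.smul_apply, Finsupp.lsingle_apply]
  congr 1; push_cast; ring

lemma psF_single (n : ℤ) (c : ℂ) :
    psF 0 1 (Finsupp.single n c) = ((-n : ℤ) : ℂ) • Finsupp.single (n-1) c := by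
  rw [psF, Finsupp.lsum_single, LinearMap.smul_apply, Finsupp.lsingle_apply]
  congr 1; push_cast; ring

lemma psH_apply (x : ℤ →₀ ℂ) (k : ℤ) : psH 1 x k = ((1 + 2*k : ℤ) : ℂ) * x k := by
  rw [psH, Finsupp.lsum_apply, Finsupp.sum_apply, Finsupp.sum]
  simp only [LinearMap.smul_apply, Finsupp.lsingle_apply, Finsupp.smul_apply,
    Finsupp.single_apply, smul_eq_mul, mul_ite, mul_zero]
  rw [Finset.sum_ite_eq' x.support k (fun m => ((1 + 2*m : ℤ):ℂ) * x m)]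
  split_ifs with h
  · rfl
  · rw [Finsupp.notMem_support_iff.mp h, mul_zero]

lemma smul_mem_cancel (W : Submodule ℂ (ℤ →₀ ℂ)) {c : ℂ} (hc : c ≠ 0) {v : ℤ →₀ ℂ}
    (h : c • v ∈ W) : v ∈ W := by
  have := W.smul_mem c⁻¹ h
  rwa [smul_smul, inv_mul_cancel₀ hc, one_smul] at this

/-- Extraction of a basis vector from a nonzero element of an H-stable subspace. -/
lemma extract (W : Submodule ℂ (ℤ →₀ ℂ)) (hH : ∀ x ∈ W, psH 1 x ∈ W) :
    ∀ N : ℕ, ∀ x : ℤ →₀ ℂ, x.support.card ≤ N → x ∈ W → x ≠ 0 →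
      ∃ m ∈ x.support, Finsupp.single m (1 : ℂ) ∈ W := by
  intro N
  induction N with
  | zero =>
    intro x hc hxW hx0
    exact absurd (Finsupp.support_eq_empty.mp (Finset.card_eq_zero.mp (Nat.le_zero.mp hc))) hx0
  | succ N ih =>
    intro x hc hxW hx0
    obtain ⟨m, hm⟩ := Finsupp.support_nonempty_iff.mpr hx0
    by_cases hsub : x.support ⊆ {m}
    · refine ⟨m, hm, ?_⟩
      have hxm : x m ≠ 0 := Finsupp.mem_support_iff.mp hm
      have hx : x = Finsupp.single m (x m) := Finsupp.support_subset_singleton.mp hsub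
      have h2 := W.smul_mem (x m)⁻¹ hxW
      rw [hx] at h2
      rwa [Finsupp.single_eq_same, Finsupp.smul_single, smul_eq_mul,
        inv_mul_cancel₀ hxm] at h2
    · set y := psH 1 x - ((1 + 2*m : ℤ) : ℂ) • x with hy
      have hyW : y ∈ W := W.sub_mem (hH x hxW) (W.smul_mem _ hxW)
      have hyk : ∀ k, y k = (((2:ℤ)*(k - m) : ℤ) : ℂ) * x k := by
        intro k
        rw [hy, Finsupp.sub_apply, Finsupp.smul_apply, psH_apply, smul_eq_mul]
        push_cast; ring
      have hsupp : y.support = x.support \ {m} := by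
        ext k
        rw [Finsupp.mem_support_iff, hyk, Finset.mem_sdiff, Finset.mem_singleton]
        constructor
        · intro h
          refine ⟨Finsupp.mem_support_iff.mpr (right_ne_zero_of_mul h), ?_⟩
          intro e
          rw [e] at h; simp at h
        · rintro ⟨hk, hkm⟩
          exact mul_ne_zero (Int.cast_ne_zero.mpr (by omega)) (Finsupp.mem_support_iff.mp hk)
      have hy0 : y ≠ 0 := by
        obtain ⟨k, hk, hkm⟩ : ∃ k ∈ x.support, k ≠ m := by
          by_contra h
          push_neg at h
          exact hsub fun k hk => Finset.mem_singleton.mpr (h k hk)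
        intro h0
        have hky : k ∈ y.support := by
          rw [hsupp]; exact Finset.mem_sdiff.mpr ⟨hk, by simpa using hkm⟩
        rw [h0] at hky; simp at hky
      have hcard : y.support.card ≤ N := by
        have : y.support.card < x.support.card := by
          rw [hsupp]
          exact Finset.card_lt_card (Finset.sdiff_ssubset (by simpa using hm) (by simp))
        omega
      obtain ⟨m', hm', h1⟩ := ih y hcard hyW hy0
      refine ⟨m', ?_, h1⟩
      rw [hsupp] at hm'
      exact (Finset.mem_sdiff.mp hm').1

lemma D0plus_eq : D0plus = Finsupp.supported ℂ ℂ {n : ℤ | 0 ≤ n} := by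
  rw [Finsupp.supported_eq_span_single, D0plus]
  congr 1
  ext f
  constructor
  · rintro ⟨n, hn, rfl⟩; exact ⟨n, hn, rfl⟩
  · rintro ⟨n, hn, rfl⟩; exact ⟨n, hn, rfl⟩

lemma D0minus_eq : D0minus = Finsupp.supported ℂ ℂ {n : ℤ | n ≤ -1} := by
  rw [Finsupp.supported_eq_span_single, D0minus]
  congr 1
  ext f
  constructor
  · rintro ⟨n, hn, rfl⟩; exact ⟨n, hn, rfl⟩
  · rintro ⟨n, hn, rfl⟩; exact ⟨n, hn, rfl⟩

lemma span_stable (W : Submodule ℂ (ℤ →₀ ℂ)) (f : (ℤ →₀ ℂ) →ₗ[ℂ] (ℤ →₀ ℂ))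
    (s : Set (ℤ →₀ ℂ)) (h : ∀ v ∈ s, f v ∈ W) : ∀ x ∈ Submodule.span ℂ s, f x ∈ W := by
  have hle : Submodule.span ℂ s ≤ W.comap f := Submodule.span_le.mpr h
  exact fun x hx => hle hx

/-- The principal series `I_{0,1}` decomposes as the direct sum of the two limits of
discrete series `D₀⁺` and `D₀⁻`, each of which is an irreducible sl₂-submodule. -/
theorem limit_of_discrete_series_decomposition :
    SL2Invariant (0 : ℂ) 1 D0plus ∧
    SL2Invariant (0 : ℂ) 1 D0minus ∧
    D0plus ⊔ D0minus = ⊤ ∧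
    D0plus ⊓ D0minus = ⊥ ∧
    (∀ W : Submodule ℂ (ℤ →₀ ℂ), W ≤ D0plus → SL2Invariant (0 : ℂ) 1 W → W ≠ ⊥ →
      W = D0plus) ∧
    (∀ W : Submodule ℂ (ℤ →₀ ℂ), W ≤ D0minus → SL2Invariant (0 : ℂ) 1 W → W ≠ ⊥ →
      W = D0minus) := by
  have invP : SL2Invariant (0 : ℂ) 1 D0plus := by
    refine ⟨span_stable _ _ _ ?_, span_stable _ _ _ ?_, span_stable _ _ _ ?_⟩
    · rintro f ⟨n, hn, rfl⟩
      rw [psH_single]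
      exact D0plus.smul_mem _ (Submodule.subset_span ⟨n, hn, rfl⟩)
    · rintro f ⟨n, hn, rfl⟩
      rw [psE_single]
      exact D0plus.smul_mem _ (Submodule.subset_span ⟨n+1, by omega, rfl⟩)
    · rintro f ⟨n, hn, rfl⟩
      rw [psF_single]
      rcases eq_or_lt_of_le hn with h | h
      · simp [← h]
      · exact D0plus.smul_mem _ (Submodule.subset_span ⟨n-1, by omega, rfl⟩)
  have invM : SL2Invariant (0 : ℂ) 1 D0minus := by
    refine ⟨span_stable _ _ _ ?_, span_stable _ _ _ ?_, span_stable _ _ _ ?_⟩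
    · rintro f ⟨n, hn, rfl⟩
      rw [psH_single]
      exact D0minus.smul_mem _ (Submodule.subset_span ⟨n, hn, rfl⟩)
    · rintro f ⟨n, hn, rfl⟩
      rw [psE_single]
      rcases eq_or_lt_of_le hn with h | h
      · simp [h]
      · exact D0minus.smul_mem _ (Submodule.subset_span ⟨n+1, by omega, rfl⟩)
    · rintro f ⟨n, hn, rfl⟩
      rw [psF_single]
      exact D0minus.smul_mem _ (Submodule.subset_span ⟨n-1, by omega, rfl⟩)
  refine ⟨invP, invM, ?_, ?_, ?_, ?_⟩
  · -- sup = ⊤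
    rw [eq_top_iff]
    have htop : (⊤ : Submodule ℂ (ℤ →₀ ℂ)) = Finsupp.supported ℂ ℂ Set.univ :=
      Finsupp.supported_univ.symm
    rw [htop, Finsupp.supported_eq_span_single]
    refine Submodule.span_le.mpr ?_
    rintro f ⟨n, -, rfl⟩
    rcases le_or_gt 0 n with h | h
    · exact Submodule.mem_sup_left (Submodule.subset_span ⟨n, h, rfl⟩)
    · exact Submodule.mem_sup_right (Submodule.subset_span ⟨n, by omega, rfl⟩)
  · -- inf = ⊥
    rw [eq_bot_iff]
    intro x hx
    rw [Submodule.mem_inf, D0plus_eq, D0minus_eq] at hx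
    have h1 := (Finsupp.mem_supported ℂ x).mp hx.1
    have h2 := (Finsupp.mem_supported ℂ x).mp hx.2
    simp only [Submodule.mem_bot]
    ext k
    by_contra hk
    have hk' : k ∈ x.support := Finsupp.mem_support_iff.mpr (by simpa using hk)
    have c1 : (0:ℤ) ≤ k := h1 hk'
    have c2 : k ≤ -1 := h2 hk'
    omega
  · -- irreducibility of D0plus
    rintro W hWle ⟨hH, hE, hF⟩ hW0
    obtain ⟨x, hxW, hx0⟩ := Submodule.exists_mem_ne_zero_of_ne_bot hW0
    obtain ⟨m, hm, hsing⟩ := extract W hH x.support.card x le_rfl hxW hx0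
    have hm0 : 0 ≤ m := by
      have := (Finsupp.mem_supported ℂ x).mp (D0plus_eq ▸ hWle hxW) hm
      simpa using this
    have down : ∀ N : ℕ, Finsupp.single (N : ℤ) (1:ℂ) ∈ W →
        Finsupp.single (0 : ℤ) (1:ℂ) ∈ W := by
      intro N
      induction N with
      | zero => intro h; simpa using h
      | succ N ihN =>
        intro h
        have h1 := hF _ h
        rw [psF_single] at h1
        have h2 : Finsupp.single (((N+1:ℕ):ℤ) - 1) (1:ℂ) ∈ W :=
          smul_mem_cancel W (Int.cast_ne_zero.mpr (by omega)) h1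
        apply ihN
        have he : (((N+1:ℕ):ℤ) - 1) = (N:ℤ) := by omega
        rwa [he] at h2
    have h0 : Finsupp.single (0 : ℤ) (1:ℂ) ∈ W := by
      have := down m.toNat
      rw [Int.toNat_of_nonneg hm0] at this
      exact this hsing
    have up : ∀ N : ℕ, Finsupp.single (N : ℤ) (1:ℂ) ∈ W := by
      intro N
      induction N with
      | zero => simpa using h0
      | succ N ihN =>
        have h1 := hE _ ihN
        rw [psE_single] at h1
        have h2 : Finsupp.single ((N:ℤ) + 1) (1:ℂ) ∈ W :=
          smul_mem_cancel W (Int.cast_ne_zero.mpr (by omega)) h1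
        have he : ((N:ℤ) + 1) = (((N+1:ℕ)):ℤ) := by omega
        rwa [he] at h2
    refine le_antisymm hWle (Submodule.span_le.mpr ?_)
    rintro f ⟨n, hn, rfl⟩
    have := up n.toNat
    rwa [Int.toNat_of_nonneg hn] at this
  · -- irreducibility of D0minus
    rintro W hWle ⟨hH, hE, hF⟩ hW0
    obtain ⟨x, hxW, hx0⟩ := Submodule.exists_mem_ne_zero_of_ne_bot hW0
    obtain ⟨m, hm, hsing⟩ := extract W hH x.support.card x le_rfl hxW hx0
    have hm0 : m ≤ -1 := by
      have := (Finsupp.mem_supported ℂ x).mp (D0minus_eq ▸ hWle hxW) hm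
      simpa using this
    have up : ∀ N : ℕ, Finsupp.single (-1 - (N:ℤ)) (1:ℂ) ∈ W →
        Finsupp.single (-1 : ℤ) (1:ℂ) ∈ W := by
      intro N
      induction N with
      | zero => intro h; simpa using h
      | succ N ihN =>
        intro h
        have h1 := hE _ h
        rw [psE_single] at h1
        have h2 : Finsupp.single ((-1 - ((N+1:ℕ):ℤ)) + 1) (1:ℂ) ∈ W :=
          smul_mem_cancel W (Int.cast_ne_zero.mpr (by omega)) h1
        apply ihN
        have he : ((-1 - ((N+1:ℕ):ℤ)) + 1) = -1 - (N:ℤ) := by omega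
        rwa [he] at h2
    have hneg1 : Finsupp.single (-1 : ℤ) (1:ℂ) ∈ W := by
      have := up (-1 - m).toNat
      have he : (-1 - (((-1 - m).toNat : ℕ):ℤ)) = m := by omega
      rw [he] at this
      exact this hsing
    have down : ∀ N : ℕ, Finsupp.single (-1 - (N:ℤ)) (1:ℂ) ∈ W := by
      intro N
      induction N with
      | zero => simpa using hneg1
      | succ N ihN =>
        have h1 := hF _ ihN
        rw [psF_single] at h1
        have h2 : Finsupp.single ((-1 - (N:ℤ)) - 1) (1:ℂ) ∈ W :=
          smul_mem_cancel W (Int.cast_ne_zero.mpr (by omega)) h1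
        have he : ((-1 - (N:ℤ)) - 1) = -1 - ((N+1:ℕ):ℤ) := by omega
        rwa [he] at h2
    refine le_antisymm hWle (Submodule.span_le.mpr ?_)
    rintro f ⟨n, hn, rfl⟩
    have := down (-1 - n).toNat
    have he : (-1 - (((-1 - n).toNat : ℕ):ℤ)) = n := by omega
    rwa [he] at this
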